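/- Let a : ℕ → ℝ be a strictly increasing function, let A = range(a) ⊆ ℝ, and let t, k be natural numbers with k ≥ 3. Suppose that (a(i+3) − a(i+2))/(a(i+2) − a(i+1)) < (a(i+2) − a(i+1))/(a(i+1) − a(i)) for each i ∈ {t, t+1, …, t+k−3}. Then there exists a finite set X ⊆ A × A with exactly k+1 elements such that every point of X is an extreme point of conv(X) and conv(X) ∩ (A × A) = X. -/
import Mathlib

open Finset

private lemma hull_le_of (X : Finset (ℝ × ℝ)) (α β r : ℝ)
    (h : ∀ p ∈ X, α * p.1 + β * p.2 ≤ r) :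
    ∀ q ∈ convexHull ℝ (X : Set (ℝ × ℝ)), α * q.1 + β * q.2 ≤ r := by
  intro q hq
  have hconv : Convex ℝ {p : ℝ × ℝ | α * p.1 + β * p.2 ≤ r} := by
    intro p hp p' hp' u v hu hv huv
    simp only [Set.mem_setOf_eq] at *
    have h1 : (u • p + v • p').1 = u * p.1 + v * p'.1 := rfl
    have h2 : (u • p + v • p').2 = u * p.2 + v * p'.2 := rfl
    rw [h1, h2]
    have hr : u * r + v * r = r := by rw [← add_mul, huv, one_mul]
    nlinarith [mul_le_mul_of_nonneg_left hp hu, mul_le_mul_of_nonneg_left hp' hv]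
  exact convexHull_min (fun p hp => h p hp) hconv hq

private lemma extreme_of_strict_max (X : Finset (ℝ × ℝ)) (x : ℝ × ℝ) (hx : x ∈ X) (α β : ℝ)
    (h : ∀ y ∈ X, y ≠ x → α * y.1 + β * y.2 < α * x.1 + β * x.2) :
    x ∈ (convexHull ℝ (X : Set (ℝ × ℝ))).extremePoints ℝ := by
  classical
  set l : (ℝ × ℝ) →ₗ[ℝ] ℝ := α • LinearMap.fst ℝ ℝ ℝ + β • LinearMap.snd ℝ ℝ ℝ with hl
  have hlapp : ∀ p : ℝ × ℝ, l p = α * p.1 + β * p.2 := by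
    intro p; simp [hl, smul_eq_mul]
  have hle : ∀ y ∈ X, l y ≤ l x := by
    intro y hy
    by_cases hyx : y = x
    · rw [hyx]
    · rw [hlapp, hlapp]; exact le_of_lt (h y hy hyx)
  have key : ∀ q ∈ convexHull ℝ (X : Set (ℝ × ℝ)), l q ≤ l x ∧ (l q = l x → q = x) := by
    intro q hq
    rw [Finset.convexHull_eq] at hq
    obtain ⟨w, hw0, hw1, hwc⟩ := hq
    rw [Finset.centerMass_eq_of_sum_1 _ _ hw1] at hwc
    have hlq : l q = ∑ y ∈ X, w y * l y := by
      rw [← hwc, map_sum]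
      exact Finset.sum_congr rfl fun y _ => by simp [smul_eq_mul]
    have hsum_le : ∀ y ∈ X, w y * l y ≤ w y * l x := fun y hy =>
      mul_le_mul_of_nonneg_left (hle y hy) (hw0 y hy)
    have h1 : l q ≤ l x := by
      rw [hlq]
      calc ∑ y ∈ X, w y * l y ≤ ∑ y ∈ X, w y * l x := Finset.sum_le_sum hsum_le
        _ = l x := by rw [← Finset.sum_mul, hw1, one_mul]
    refine ⟨h1, fun heq => ?_⟩
    have hz : ∑ y ∈ X, w y * (l x - l y) = 0 := by
      have : ∑ y ∈ X, w y * (l x - l y) = (∑ y ∈ X, w y) * l x - ∑ y ∈ X, w y * l y := by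
        rw [Finset.sum_mul, ← Finset.sum_sub_distrib]
        exact Finset.sum_congr rfl fun y _ => by ring
      rw [this, hw1, one_mul, ← hlq, heq, sub_self]
    have hterm : ∀ y ∈ X, w y * (l x - l y) = 0 :=
      (Finset.sum_eq_zero_iff_of_nonneg
        (fun y hy => mul_nonneg (hw0 y hy) (sub_nonneg.2 (hle y hy)))).1 hz
    have hwzero : ∀ y ∈ X, y ≠ x → w y = 0 := by
      intro y hy hyx
      have h2 := hterm y hy
      have h3 : l x - l y > 0 := by
        rw [hlapp, hlapp]; linarith [h y hy hyx]
      rcases mul_eq_zero.1 h2 with h4 | h4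
      · exact h4
      · linarith
    have hwx : w x = 1 := by
      rw [← hw1]
      rw [Finset.sum_eq_single x (fun y hy hyx => hwzero y hy hyx) (fun hxx => absurd hx hxx)]
    rw [← hwc, Finset.sum_eq_single x (fun y hy hyx => by rw [hwzero y hy hyx]; simp)
      (fun hxx => absurd hx hxx)]
    rw [hwx]; simp
  rw [mem_extremePoints]
  refine ⟨subset_convexHull ℝ _ hx, fun x₁ h₁ x₂ h₂ hseg => ?_⟩
  obtain ⟨u, v, hu, hv, huv, hx12⟩ := hseg
  have e1 := key x₁ h₁
  have e2 := key x₂ h₂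
  have hlx : l x = u * l x₁ + v * l x₂ := by
    rw [← hx12, map_add, map_smul, map_smul, smul_eq_mul, smul_eq_mul]
  have s1 : u * (l x - l x₁) + v * (l x - l x₂) = 0 := by
    linear_combination (l x) * huv + hlx
  have t1 : 0 ≤ u * (l x - l x₁) := mul_nonneg hu.le (sub_nonneg.2 e1.1)
  have t2 : 0 ≤ v * (l x - l x₂) := mul_nonneg hv.le (sub_nonneg.2 e2.1)
  have z1 : u * (l x - l x₁) = 0 := by linarith
  have z2 : v * (l x - l x₂) = 0 := by linarith
  have hx1 : l x₁ = l x := by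
    rcases mul_eq_zero.1 z1 with h' | h'
    · exact absurd h' (ne_of_gt hu)
    · linarith
  have hx2 : l x₂ = l x := by
    rcases mul_eq_zero.1 z2 with h' | h'
    · exact absurd h' (ne_of_gt hv)
    · linarith
  exact ⟨e1.2 hx1, e2.2 hx2⟩

private lemma mediant {x y u v : ℝ} (hu : 0 < u) (hv : 0 < v) (h : y / v < x / u) :
    y / v < (x + y) / (u + v) ∧ (x + y) / (u + v) < x / u := by
  rw [div_lt_div_iff₀ hv hu] at h
  constructor
  · rw [div_lt_div_iff₀ hv (by linarith)]; nlinarith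
  · rw [div_lt_div_iff₀ (by linarith) hu]; nlinarith

/-- Lemma 1 of the paper: if the ratios of consecutive gaps of a strictly increasing
sequence are decreasing along `k` consecutive indices, then `A × A` contains an
empty polygon with `k + 1` vertices. -/
theorem empty_polygon_of_decreasing_gap_ratios
    (a : ℕ → ℝ) (ha : StrictMono a) (t k : ℕ) (hk : 3 ≤ k)
    (hratio : ∀ i : ℕ, t ≤ i → i ≤ t + k - 3 →
      (a (i + 3) - a (i + 2)) / (a (i + 2) - a (i + 1)) <
        (a (i + 2) - a (i + 1)) / (a (i + 1) - a i)) :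
    ∃ X : Finset (ℝ × ℝ), X.card = k + 1 ∧
      (X : Set (ℝ × ℝ)) ⊆ (Set.range a) ×ˢ (Set.range a) ∧
      (∀ x ∈ X, x ∈ (convexHull ℝ (X : Set (ℝ × ℝ))).extremePoints ℝ) ∧
      convexHull ℝ (X : Set (ℝ × ℝ)) ∩ (Set.range a) ×ˢ (Set.range a)
        = (X : Set (ℝ × ℝ)) := by
  classical
  obtain ⟨m, rfl⟩ : ∃ m, k = m + 3 := ⟨k - 3, by omega⟩
  set b : ℕ → ℝ := fun i => a (t + i) with hbdef
  have hb : StrictMono b := fun i j hij => ha (by omega)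
  have hD : ∀ i : ℕ, 0 < b (i + 1) - b i := fun i => sub_pos.2 (hb (Nat.lt_succ_self i))
  set s : ℕ → ℝ := fun i => (b (i + 2) - b (i + 1)) / (b (i + 1) - b i) with hsdef
  have hspos : ∀ i, 0 < s i := fun i => div_pos (hD (i + 1)) (hD i)
  have hsD : ∀ i, s i * (b (i + 1) - b i) = b (i + 2) - b (i + 1) := fun i =>
    div_mul_cancel₀ _ (ne_of_gt (hD i))
  -- decreasing slopes
  have hs : ∀ i, i ≤ m → s (i + 1) < s i := by
    intro i him
    have h := hratio (t + i) (Nat.le_add_right t i) (by omega)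
    have e : ∀ j : ℕ, a (t + i + j) = b (i + j) := fun j => congrArg a (by omega)
    have e0 : a (t + i) = b i := congrArg a (by omega)
    rw [e 3, e 2, e 1, e0] at h
    have e1 : i + 1 + 2 = i + 3 := by omega
    have e2 : i + 1 + 1 = i + 2 := by omega
    rw [hsdef]
    simp only [e1, e2]
    exact h
  have hsle : ∀ j, j ≤ m + 1 → ∀ i, i ≤ j → s j ≤ s i := by
    intro j hj
    induction j with
    | zero => intro i hi; rw [Nat.le_zero.mp hi]
    | succ n ih =>
      intro i hi
      rcases Nat.lt_or_ge i (n + 1) with h' | h'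
      · have h1 : s (n + 1) < s n := hs n (by omega)
        have h2 := ih (by omega) i (by omega)
        linarith
      · have : i = n + 1 := by omega
        rw [this]
  have hslt : ∀ i j, i < j → j ≤ m + 1 → s j < s i := by
    intro i j hij hj
    have h1 : s j ≤ s (i + 1) := hsle j hj (i + 1) (by omega)
    have h2 : s (i + 1) < s i := hs i (by omega)
    linarith
  -- chain lies below each edge line (right part)
  have up : ∀ j, j ≤ m + 1 → ∀ d, j + d ≤ m + 2 →
      b (j + d + 1) - b (j + 1) ≤ s j * (b (j + d) - b j) := by
    intro j hj d
    induction d with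
    | zero => intro _; simp
    | succ n ih =>
      intro hd
      have h1 := ih (by omega)
      have h2 := hsD (j + n)
      have h3 : s (j + n) ≤ s j := hsle (j + n) (by omega) j (Nat.le_add_right j n)
      have h3' : s (j + n) * (b (j + n + 1) - b (j + n)) ≤ s j * (b (j + n + 1) - b (j + n)) :=
        mul_le_mul_of_nonneg_right h3 (hD (j + n)).le
      have hid : s j * (b (j + n + 1) - b j)
          = s j * (b (j + n) - b j) + s j * (b (j + n + 1) - b (j + n)) := by ring
      have e : j + (n + 1) = j + n + 1 := by omega
      rw [e]
      linarith
  -- chain lies below each edge line (left part)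
  have down : ∀ j, j ≤ m + 1 → ∀ d l, l + d = j →
      s j * (b j - b l) ≤ b (j + 1) - b (l + 1) := by
    intro j hj d
    induction d with
    | zero =>
      intro l h
      have hlj : l = j := by omega
      rw [hlj]; simp
    | succ n ih =>
      intro l h
      have h1 := ih (l + 1) (by omega)
      have h2 := hsD l
      have h3 : s j ≤ s l := hsle j hj l (by omega)
      have h3' : s j * (b (l + 1) - b l) ≤ s l * (b (l + 1) - b l) :=
        mul_le_mul_of_nonneg_right h3 (hD l).le
      have hid : s j * (b j - b l)
          = s j * (b j - b (l + 1)) + s j * (b (l + 1) - b l) := by ring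
      have e : l + 1 + 1 = l + 2 := by omega
      rw [e] at h1
      linarith
  -- shifted version: chord from P_l to P_{j+1} has slope at least s j, for l ≤ j
  have down' : ∀ j, j ≤ m + 1 → ∀ l, l ≤ j →
      s j * (b (j + 1) - b l) ≤ b (j + 2) - b (l + 1) := by
    intro j hj l hl
    have h1 := down j hj (j - l) l (by omega)
    have h2 := hsD j
    have hid : s j * (b (j + 1) - b l)
        = s j * (b j - b l) + s j * (b (j + 1) - b j) := by ring
    linarith
  -- combined upper bound: every vertex lies below every edge line
  have UB : ∀ j, j ≤ m + 1 → ∀ l, l ≤ m + 2 →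
      b (l + 1) ≤ b (j + 1) + s j * (b l - b j) := by
    intro j hj l hl
    rcases le_or_gt l j with h' | h'
    · have h1 := down j hj (j - l) l (by omega)
      have hid : s j * (b l - b j) = -(s j * (b j - b l)) := by ring
      linarith
    · have h1 := up j hj (l - j) (by omega)
      have e : j + (l - j) = l := by omega
      rw [e] at h1
      linarith
  -- slopes from the bottom point B = (b 0, b 0) to the chain points
  set g : ℕ → ℝ := fun l => (b (l + 1) - b 0) / (b l - b 0) with hgdef
  have hbpos : ∀ l, 1 ≤ l → 0 < b l - b 0 := fun l hl => sub_pos.2 (hb (by omega))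
  have ginv : ∀ l, 1 ≤ l → l ≤ m + 2 →
      (∀ r, 1 ≤ r → r ≤ l → g l ≤ g r) ∧ (l ≤ m + 1 → s l < g l) := by
    intro l
    induction l with
    | zero => intro h; omega
    | succ n ih =>
      intro _ hn
      rcases Nat.eq_zero_or_pos n with hn0 | hn0
      · subst hn0
        refine ⟨fun r hr1 hr2 => ?_, fun _ => ?_⟩
        · have : r = 1 := by omega
          rw [this]
        · -- s 1 < g 1 = 1 + s 0
          have h1 : s 1 < s 0 := hs 0 (by omega)
          have h2 : s 0 < g 1 := by
            rw [hsdef, hgdef]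
            simp only
            rw [div_lt_div_iff₀ (hD 0) (hbpos 1 le_rfl)]
            nlinarith [hD 0, hD 1, hb (show (0:ℕ) < 1 by omega)]
          linarith
      · have ihn := ih hn0 (by omega)
        have hsg : s n < g n := ihn.2 (by omega)
        have hgm : g (n + 1) = ((b (n + 1) - b 0) + (b (n + 2) - b (n + 1))) /
            ((b n - b 0) + (b (n + 1) - b n)) := by
          rw [hgdef]; simp only; congr 1 <;> ring
        have hsn : s n = (b (n + 2) - b (n + 1)) / (b (n + 1) - b n) := by rw [hsdef]
        have hgn : g n = (b (n + 1) - b 0) / (b n - b 0) := by rw [hgdef]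
        have hmed := mediant (hbpos n hn0) (hD n) (by rw [← hsn, ← hgn]; exact hsg)
        have hup : g (n + 1) < g n := by rw [hgm, hgn]; exact hmed.2
        have hdown : s n < g (n + 1) := by rw [hgm, hsn]; exact hmed.1
        refine ⟨fun r hr1 hr2 => ?_, fun hn1 => ?_⟩
        · rcases Nat.lt_or_ge r (n + 1) with h' | h'
          · have := ihn.1 r hr1 (by omega)
            linarith
          · have : r = n + 1 := by omega
            rw [this]
        · have : s (n + 1) < s n := hs n (by omega)
          linarith
  have hM1 : 1 < g (m + 2) := by
    rw [hgdef]
    simp only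
    rw [lt_div_iff₀ (hbpos (m + 2) (by omega))]
    have := hb (show m + 2 < m + 3 by omega)
    linarith
  have LB : ∀ l, l ≤ m + 2 → b 0 + g (m + 2) * (b l - b 0) ≤ b (l + 1) := by
    intro l hl
    rcases Nat.eq_zero_or_pos l with h0 | h0
    · subst h0
      have : g (m + 2) * (b 0 - b 0) = 0 := by ring
      have h1 := hb (show (0:ℕ) < 1 by omega)
      linarith
    · have h1 : g (m + 2) ≤ g l := (ginv (m + 2) (by omega) le_rfl).1 l h0 hl
      have h2 : g (m + 2) * (b l - b 0) ≤ g l * (b l - b 0) :=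
        mul_le_mul_of_nonneg_right h1 (hbpos l h0).le
      have h3 : g l * (b l - b 0) = b (l + 1) - b 0 := by
        rw [hgdef]
        exact div_mul_cancel₀ _ (ne_of_gt (hbpos l h0))
      linarith
  -- the polygon
  set P : ℕ → ℝ × ℝ := fun l => ((b l : ℝ), (b (l + 1) : ℝ)) with hPdef
  set X : Finset (ℝ × ℝ) := insert (b 0, b 0) ((Finset.range (m + 3)).image P) with hXdef
  have hmemX : ∀ p : ℝ × ℝ, p ∈ X ↔ p = ((b 0 : ℝ), (b 0 : ℝ)) ∨ ∃ l ≤ m + 2, p = P l := by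
    intro p
    rw [hXdef, Finset.mem_insert]
    constructor
    · rintro (h | h)
      · exact Or.inl h
      · obtain ⟨l, hl, rfl⟩ := Finset.mem_image.1 h
        exact Or.inr ⟨l, by have := Finset.mem_range.1 hl; omega, rfl⟩
    · rintro (rfl | ⟨l, hl, rfl⟩)
      · exact Or.inl rfl
      · exact Or.inr (Finset.mem_image.2 ⟨l, Finset.mem_range.2 (by omega), rfl⟩)
  have hBX : ((b 0 : ℝ), (b 0 : ℝ)) ∈ X := (hmemX _).2 (Or.inl rfl)
  have hPX : ∀ l, l ≤ m + 2 → P l ∈ X := fun l hl => (hmemX _).2 (Or.inr ⟨l, hl, rfl⟩)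
  have hXsub : (X : Set (ℝ × ℝ)) ⊆ (Set.range a) ×ˢ (Set.range a) := by
    intro p hp
    rcases (hmemX p).1 (Finset.mem_coe.1 hp) with rfl | ⟨l, _, rfl⟩
    · exact ⟨⟨t + 0, rfl⟩, ⟨t + 0, rfl⟩⟩
    · exact ⟨⟨t + l, rfl⟩, ⟨t + (l + 1), rfl⟩⟩
  refine ⟨X, ?_, ?_, ?_, ?_⟩
  · -- cardinality
    rw [hXdef]
    rw [Finset.card_insert_of_notMem, Finset.card_image_of_injOn, Finset.card_range]
    · intro i _ j _ hij
      exact hb.injective (congrArg Prod.fst hij)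
    · intro hcon
      obtain ⟨l, _, hl⟩ := Finset.mem_image.1 hcon
      have h1 : b (l + 1) = b 0 := congrArg Prod.snd hl
      have := hb.injective h1
      omega
  · -- subset of A × A
    exact hXsub
  · -- extreme points
    intro x hx
    rcases (hmemX x).1 hx with rfl | ⟨i, hi, rfl⟩
    · refine extreme_of_strict_max X _ hBX 1 (-1) ?_
      intro y hy hyne
      rcases (hmemX y).1 hy with rfl | ⟨l, _, rfl⟩
      · exact absurd rfl hyne
      · have := hD l
        simp only [hPdef]
        linarith
    · -- x = P i
      rcases Nat.eq_zero_or_pos i with rfl | hip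
      · -- i = 0, slope s 0 + 1
        refine extreme_of_strict_max X _ (hPX 0 (by omega)) (-(s 0 + 1)) 1 ?_
        intro y hy hyne
        rcases (hmemX y).1 hy with rfl | ⟨l, hl, rfl⟩
        · simp only [hPdef]
          have := hD 0
          linarith
        · have hl0 : l ≠ 0 := fun h => hyne (by rw [h])
          have hfact : b (l + 1) - b 1 ≤ s 0 * (b l - b 0) := by
            have h1 := up 0 (by omega) l (by omega)
            simpa using h1
          have hp : 0 < b l - b 0 := hbpos l (by omega)
          simp only [hPdef]
          nlinarith
      · rcases Nat.lt_or_ge i (m + 2) with him | him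
        · -- 1 ≤ i ≤ m + 1, slope (s (i-1) + s i)/2
          obtain ⟨j, rfl⟩ : ∃ j, i = j + 1 := ⟨i - 1, by omega⟩
          have hjm : j ≤ m := by omega
          set c : ℝ := (s j + s (j + 1)) / 2 with hcdef
          have hc1 : s (j + 1) < c := by
            have := hs j hjm
            rw [hcdef]; linarith
          have hc2 : c < s j := by
            have := hs j hjm
            rw [hcdef]; linarith
          refine extreme_of_strict_max X _ (hPX (j + 1) (by omega)) (-c) 1 ?_
          intro y hy hyne
          rcases (hmemX y).1 hy with rfl | ⟨l, hl, rfl⟩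
          · -- bottom point B
            have hfact := down' j (by omega) 0 (by omega)
            have hp : 0 < b (j + 1) - b 0 := hbpos (j + 1) (by omega)
            have hmul : c * (b (j + 1) - b 0) < s j * (b (j + 1) - b 0) :=
              mul_lt_mul_of_pos_right hc2 hp
            have hb01 : b 0 < b 1 := hb (by omega)
            simp only [hPdef]
            nlinarith
          · have hlne : l ≠ j + 1 := fun h => hyne (by rw [h])
            rcases Nat.lt_or_ge l (j + 1) with hlj | hlj
            · -- l ≤ j : use edge j from the left
              have hfact := down' j (by omega) l (by omega)
              have hp : 0 < b (j + 1) - b l := sub_pos.2 (hb (by omega))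
              have hmul : c * (b (j + 1) - b l) < s j * (b (j + 1) - b l) :=
                mul_lt_mul_of_pos_right hc2 hp
              simp only [hPdef]
              nlinarith
            · -- l > j + 1 : use edge j + 1 from the right
              have hlgt : j + 1 < l := by omega
              have h1 := up (j + 1) (by omega) (l - (j + 1)) (by omega)
              have e : j + 1 + (l - (j + 1)) = l := by omega
              rw [e] at h1
              have hp : 0 < b l - b (j + 1) := sub_pos.2 (hb hlgt)
              have hmul : s (j + 1) * (b l - b (j + 1)) < c * (b l - b (j + 1)) :=
                mul_lt_mul_of_pos_right hc1 hp
              simp only [hPdef]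
              nlinarith
        · -- i = m + 2, slope s (m+1) - 1
          have him2 : i = m + 2 := by omega
          subst him2
          set c : ℝ := s (m + 1) - 1 with hcdef
          have hc : c < s (m + 1) := by rw [hcdef]; linarith
          refine extreme_of_strict_max X _ (hPX (m + 2) (by omega)) (-c) 1 ?_
          intro y hy hyne
          rcases (hmemX y).1 hy with rfl | ⟨l, hl, rfl⟩
          · have hfact := down' (m + 1) (by omega) 0 (by omega)
            have hp : 0 < b (m + 2) - b 0 := hbpos (m + 2) (by omega)
            have hmul : c * (b (m + 2) - b 0) < s (m + 1) * (b (m + 2) - b 0) :=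
              mul_lt_mul_of_pos_right hc hp
            have hb01 : b 0 < b 1 := hb (by omega)
            simp only [hPdef]
            nlinarith
          · have hlne : l ≠ m + 2 := fun h => hyne (by rw [h])
            have hlm : l ≤ m + 1 := by omega
            have hfact := down' (m + 1) (by omega) l hlm
            have hp : 0 < b (m + 2) - b l := sub_pos.2 (hb (by omega))
            have hmul : c * (b (m + 2) - b l) < s (m + 1) * (b (m + 2) - b l) :=
              mul_lt_mul_of_pos_right hc hp
            simp only [hPdef]
            nlinarith
  · -- emptiness
    apply Set.eq_of_subset_of_subset
    · rintro q ⟨hq, hq2⟩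
      obtain ⟨⟨i, hi⟩, jj, hjj⟩ := hq2
      -- horizontal bounds
      have c1 : ∀ p ∈ X, (1:ℝ) * p.1 + 0 * p.2 ≤ b (m + 2) := by
        intro p hp
        rcases (hmemX p).1 hp with rfl | ⟨l, hl, rfl⟩
        · have := hb.monotone (show 0 ≤ m + 2 by omega)
          simp only [hPdef]; linarith
        · have := hb.monotone hl
          simp only [hPdef]; linarith
      have hq1ub : q.1 ≤ b (m + 2) := by
        have := hull_le_of X 1 0 (b (m + 2)) c1 q hq; linarith
      have c2 : ∀ p ∈ X, (-1 : ℝ) * p.1 + 0 * p.2 ≤ -(b 0) := by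
        intro p hp
        rcases (hmemX p).1 hp with rfl | ⟨l, hl, rfl⟩
        · simp only [hPdef]; linarith
        · have := hb.monotone (show 0 ≤ l by omega)
          simp only [hPdef]; linarith
      have hq1lb : b 0 ≤ q.1 := by
        have := hull_le_of X (-1) 0 (-(b 0)) c2 q hq; linarith
      have hit : t ≤ i := by
        have h' : a (t + 0) ≤ a i := by rw [hi]; exact hq1lb
        have := ha.le_iff_le.1 h'
        omega
      have hile : i ≤ t + (m + 2) := by
        have h' : a i ≤ a (t + (m + 2)) := by rw [hi]; exact hq1ub
        exact ha.le_iff_le.1 h'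
      obtain ⟨i', rfl⟩ : ∃ i', i = t + i' := ⟨i - t, by omega⟩
      have hi'le : i' ≤ m + 2 := by omega
      have e1 : q.1 = b i' := hi.symm
      -- upper bound on q.2
      have c3gen : ∀ j0, j0 ≤ m + 1 → ∀ p ∈ X,
          (-(s j0)) * p.1 + 1 * p.2 ≤ b (j0 + 1) - s j0 * b j0 := by
        intro j0 hj0 p hp
        rcases (hmemX p).1 hp with rfl | ⟨l, hl, rfl⟩
        · have h1 := UB j0 hj0 0 (by omega)
          have hb01 : b 0 < b 1 := hb (by omega)
          simp only [hPdef]; linarith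
        · have h1 := UB j0 hj0 l hl
          simp only [hPdef]; linarith
      have hub : q.2 ≤ b (i' + 1) := by
        rcases Nat.lt_or_ge i' (m + 2) with hc | hc
        · have := hull_le_of X (-(s i')) 1 (b (i' + 1) - s i' * b i')
            (c3gen i' (by omega)) q hq
          rw [e1] at this; linarith
        · have hieq : i' = m + 2 := by omega
          subst hieq
          have := hull_le_of X (-(s (m + 1))) 1 (b (m + 2) - s (m + 1) * b (m + 1))
            (c3gen (m + 1) (by omega)) q hq
          rw [e1] at this
          have h2 := hsD (m + 1)
          have egoal : m + 2 + 1 = m + 3 := by omega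
          rw [egoal]
          linarith
      -- lower bound on q.2
      have c4 : ∀ p ∈ X, (g (m + 2)) * p.1 + (-1 : ℝ) * p.2 ≤ g (m + 2) * b 0 - b 0 := by
        intro p hp
        rcases (hmemX p).1 hp with rfl | ⟨l, hl, rfl⟩
        · simp only [hPdef]; linarith
        · have h1 := LB l hl
          simp only [hPdef]; linarith
      have hlb : b 0 + g (m + 2) * (b i' - b 0) ≤ q.2 := by
        have := hull_le_of X (g (m + 2)) (-1) (g (m + 2) * b 0 - b 0) c4 q hq
        rw [e1] at this; linarith
      -- identify q
      have hjub : jj ≤ t + (i' + 1) := by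
        refine ha.le_iff_le.1 ?_
        rw [hjj]
        exact hub
      rcases Nat.eq_zero_or_pos i' with hz | hpos
      · subst hz
        have hjlb : t ≤ jj := by
          have h' : a (t + 0) ≤ a jj := by
            rw [hjj]
            have : g (m + 2) * (b 0 - b 0) = 0 := by ring
            linarith
          have := ha.le_iff_le.1 h'
          omega
        rcases (show jj = t ∨ jj = t + 1 by omega) with hje | hje
        · have hq2e : q.2 = b 0 :=
            ((congrArg a (show t + 0 = jj by omega)).trans hjj).symm
          have : q = ((b 0 : ℝ), (b 0 : ℝ)) := Prod.ext e1 hq2e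
          rw [this]
          exact Finset.mem_coe.2 hBX
        · have hq2e : q.2 = b 1 :=
            ((congrArg a (show t + 1 = jj by omega)).trans hjj).symm
          have : q = P 0 := Prod.ext e1 hq2e
          rw [this]
          exact Finset.mem_coe.2 (hPX 0 (by omega))
      · -- i' ≥ 1 : q must be P i'
        have hd : 0 < b i' - b 0 := hbpos i' hpos
        have hstep : (1:ℝ) * (b i' - b 0) < g (m + 2) * (b i' - b 0) :=
          mul_lt_mul_of_pos_right hM1 hd
        have hq2gt : b i' < q.2 := by linarith
        have hjlb : t + i' < jj := by
          refine ha.lt_iff_lt.1 ?_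
          rw [hjj]
          exact hq2gt
        have hjeq : jj = t + (i' + 1) := by omega
        have hq2e : q.2 = b (i' + 1) :=
          ((congrArg a (show t + (i' + 1) = jj by omega)).trans hjj).symm
        have : q = P i' := Prod.ext e1 hq2e
        rw [this]
        exact Finset.mem_coe.2 (hPX i' hi'le)
    · intro q hq
      exact ⟨subset_convexHull ℝ _ hq, hXsub hq⟩
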